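/- There exists a constant C > 0 such that for every λ ∈ [1/2, 2], the map ũ_λ − ũ_1 : ℝ² → ℝ³ is differentiable with square-integrable derivative and ∫_{ℝ²} Σ_{i=1}^{2} Σ_{j=1}^{3} (∂_i(ũ_λ − ũ_1)^j(X,Y))² dX dY ≤ C (λ − 1)². -/

import Mathlib

set_option maxHeartbeats 1600000


open MeasureTheory

/-- The stereographic dilation `u_λ = Π ∘ D_λ ∘ Π⁻¹` read in stereographic
coordinates. -/
noncomputable def utilde (lam : ℝ) (p : ℝ × ℝ) : Fin 3 → ℝ :=
  ![2 * lam * p.1 / (1 + lam ^ 2 * (p.1 ^ 2 + p.2 ^ 2)),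
    2 * lam * p.2 / (1 + lam ^ 2 * (p.1 ^ 2 + p.2 ^ 2)),
    (lam ^ 2 * (p.1 ^ 2 + p.2 ^ 2) - 1) / (1 + lam ^ 2 * (p.1 ^ 2 + p.2 ^ 2))]

/-! ### Auxiliary derivative computations -/

section Deriv

lemma fderiv_apply_e1 {f : ℝ × ℝ → ℝ} {p : ℝ × ℝ} (hf : DifferentiableAt ℝ f p) {a : ℝ}
    (h : HasDerivAt (fun x => f (x, p.2)) a p.1) : fderiv ℝ f p (1, 0) = a := by
  have hγ : HasDerivAt (fun x : ℝ => (x, p.2)) ((1 : ℝ), (0 : ℝ)) p.1 :=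
    (hasDerivAt_id _).prodMk (hasDerivAt_const _ _)
  exact (hf.hasFDerivAt.comp_hasDerivAt p.1 hγ).unique h

lemma fderiv_apply_e2 {f : ℝ × ℝ → ℝ} {p : ℝ × ℝ} (hf : DifferentiableAt ℝ f p) {a : ℝ}
    (h : HasDerivAt (fun y => f (p.1, y)) a p.2) : fderiv ℝ f p (0, 1) = a := by
  have hγ : HasDerivAt (fun y : ℝ => (p.1, y)) ((0 : ℝ), (1 : ℝ)) p.2 :=
    (hasDerivAt_const _ _).prodMk (hasDerivAt_id _)
  exact (hf.hasFDerivAt.comp_hasDerivAt p.2 hγ).unique h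

lemma hden_x (lam Y X : ℝ) :
    HasDerivAt (fun x : ℝ => 1 + lam ^ 2 * (x ^ 2 + Y ^ 2)) (lam ^ 2 * (2 * X)) X := by
  have h2 : HasDerivAt (fun x : ℝ => x ^ 2 + Y ^ 2) (2 * X) X := by
    simpa using (hasDerivAt_pow 2 X).add_const (Y ^ 2)
  exact (h2.const_mul (lam ^ 2)).const_add 1

lemma hden_y (lam X Y : ℝ) :
    HasDerivAt (fun y : ℝ => 1 + lam ^ 2 * (X ^ 2 + y ^ 2)) (lam ^ 2 * (2 * Y)) Y := by
  have h2 : HasDerivAt (fun y : ℝ => X ^ 2 + y ^ 2) (2 * Y) Y := by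
    simpa using (hasDerivAt_pow 2 Y).const_add (X ^ 2)
  exact (h2.const_mul (lam ^ 2)).const_add 1

lemma hd0x (lam Y X : ℝ) :
    HasDerivAt (fun x : ℝ => 2 * lam * x / (1 + lam ^ 2 * (x ^ 2 + Y ^ 2)))
      (2 * lam * (1 + lam ^ 2 * (Y ^ 2 - X ^ 2)) / (1 + lam ^ 2 * (X ^ 2 + Y ^ 2)) ^ 2) X := by
  have hne : (1 + lam ^ 2 * (X ^ 2 + Y ^ 2)) ≠ 0 := by positivity
  have hnum : HasDerivAt (fun x : ℝ => 2 * lam * x) (2 * lam) X := by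
    simpa using (hasDerivAt_id X).const_mul (2 * lam)
  have := hnum.fun_div (hden_x lam Y X) hne
  refine this.congr_deriv ?_
  field_simp
  ring

lemma hd0y (lam X Y : ℝ) :
    HasDerivAt (fun y : ℝ => 2 * lam * X / (1 + lam ^ 2 * (X ^ 2 + y ^ 2)))
      (-(4 * lam ^ 3 * X * Y) / (1 + lam ^ 2 * (X ^ 2 + Y ^ 2)) ^ 2) Y := by
  have hne : (1 + lam ^ 2 * (X ^ 2 + Y ^ 2)) ≠ 0 := by positivity
  have hnum : HasDerivAt (fun _ : ℝ => 2 * lam * X) 0 Y := hasDerivAt_const _ _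
  have := hnum.fun_div (hden_y lam X Y) hne
  refine this.congr_deriv ?_
  field_simp
  ring

lemma hd1x (lam Y X : ℝ) :
    HasDerivAt (fun x : ℝ => 2 * lam * Y / (1 + lam ^ 2 * (x ^ 2 + Y ^ 2)))
      (-(4 * lam ^ 3 * X * Y) / (1 + lam ^ 2 * (X ^ 2 + Y ^ 2)) ^ 2) X := by
  have hne : (1 + lam ^ 2 * (X ^ 2 + Y ^ 2)) ≠ 0 := by positivity
  have hnum : HasDerivAt (fun _ : ℝ => 2 * lam * Y) 0 X := hasDerivAt_const _ _
  have := hnum.fun_div (hden_x lam Y X) hne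
  refine this.congr_deriv ?_
  field_simp
  ring

lemma hd1y (lam X Y : ℝ) :
    HasDerivAt (fun y : ℝ => 2 * lam * y / (1 + lam ^ 2 * (X ^ 2 + y ^ 2)))
      (2 * lam * (1 + lam ^ 2 * (X ^ 2 - Y ^ 2)) / (1 + lam ^ 2 * (X ^ 2 + Y ^ 2)) ^ 2) Y := by
  have hne : (1 + lam ^ 2 * (X ^ 2 + Y ^ 2)) ≠ 0 := by positivity
  have hnum : HasDerivAt (fun y : ℝ => 2 * lam * y) (2 * lam) Y := by
    simpa using (hasDerivAt_id Y).const_mul (2 * lam)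
  have := hnum.fun_div (hden_y lam X Y) hne
  refine this.congr_deriv ?_
  field_simp
  ring

lemma hd2x (lam Y X : ℝ) :
    HasDerivAt (fun x : ℝ => (lam ^ 2 * (x ^ 2 + Y ^ 2) - 1) / (1 + lam ^ 2 * (x ^ 2 + Y ^ 2)))
      (4 * lam ^ 2 * X / (1 + lam ^ 2 * (X ^ 2 + Y ^ 2)) ^ 2) X := by
  have hne : (1 + lam ^ 2 * (X ^ 2 + Y ^ 2)) ≠ 0 := by positivity
  have h2 : HasDerivAt (fun x : ℝ => x ^ 2 + Y ^ 2) (2 * X) X := by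
    simpa using (hasDerivAt_pow 2 X).add_const (Y ^ 2)
  have hnum : HasDerivAt (fun x : ℝ => lam ^ 2 * (x ^ 2 + Y ^ 2) - 1) (lam ^ 2 * (2 * X)) X :=
    (h2.const_mul (lam ^ 2)).sub_const 1
  have := hnum.fun_div (hden_x lam Y X) hne
  refine this.congr_deriv ?_
  field_simp
  ring

lemma hd2y (lam X Y : ℝ) :
    HasDerivAt (fun y : ℝ => (lam ^ 2 * (X ^ 2 + y ^ 2) - 1) / (1 + lam ^ 2 * (X ^ 2 + y ^ 2)))
      (4 * lam ^ 2 * Y / (1 + lam ^ 2 * (X ^ 2 + Y ^ 2)) ^ 2) Y := by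
  have hne : (1 + lam ^ 2 * (X ^ 2 + Y ^ 2)) ≠ 0 := by positivity
  have h2 : HasDerivAt (fun y : ℝ => X ^ 2 + y ^ 2) (2 * Y) Y := by
    simpa using (hasDerivAt_pow 2 Y).const_add (X ^ 2)
  have hnum : HasDerivAt (fun y : ℝ => lam ^ 2 * (X ^ 2 + y ^ 2) - 1) (lam ^ 2 * (2 * Y)) Y :=
    (h2.const_mul (lam ^ 2)).sub_const 1
  have := hnum.fun_div (hden_y lam X Y) hne
  refine this.congr_deriv ?_
  field_simp
  ring

lemma diff_utilde (lam : ℝ) (j : Fin 3) :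
    Differentiable ℝ (fun p : ℝ × ℝ => utilde lam p j) := by
  have hne : ∀ p : ℝ × ℝ, 1 + lam ^ 2 * (p.1 ^ 2 + p.2 ^ 2) ≠ 0 := fun p => by positivity
  have hden : Differentiable ℝ (fun p : ℝ × ℝ => 1 + lam ^ 2 * (p.1 ^ 2 + p.2 ^ 2)) := by fun_prop
  have hinv : Differentiable ℝ (fun p : ℝ × ℝ => (1 + lam ^ 2 * (p.1 ^ 2 + p.2 ^ 2))⁻¹) :=
    hden.inv hne
  have h1 : Differentiable ℝ (fun p : ℝ × ℝ => 2 * lam * p.1) := by fun_prop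
  have h2 : Differentiable ℝ (fun p : ℝ × ℝ => 2 * lam * p.2) := by fun_prop
  have h3 : Differentiable ℝ (fun p : ℝ × ℝ => lam ^ 2 * (p.1 ^ 2 + p.2 ^ 2) - 1) := by fun_prop
  fin_cases j
  · show Differentiable ℝ fun p : ℝ × ℝ => 2 * lam * p.1 / (1 + lam ^ 2 * (p.1 ^ 2 + p.2 ^ 2))
    simp only [div_eq_mul_inv]
    exact h1.mul hinv
  · show Differentiable ℝ fun p : ℝ × ℝ => 2 * lam * p.2 / (1 + lam ^ 2 * (p.1 ^ 2 + p.2 ^ 2))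
    simp only [div_eq_mul_inv]
    exact h2.mul hinv
  · show Differentiable ℝ fun p : ℝ × ℝ =>
      (lam ^ 2 * (p.1 ^ 2 + p.2 ^ 2) - 1) / (1 + lam ^ 2 * (p.1 ^ 2 + p.2 ^ 2))
    simp only [div_eq_mul_inv]
    exact h3.mul hinv

lemma fd_u0x (lam : ℝ) (p : ℝ × ℝ) :
    fderiv ℝ (fun q : ℝ × ℝ => utilde lam q 0) p (1, 0)
      = 2 * lam * (1 + lam ^ 2 * (p.2 ^ 2 - p.1 ^ 2)) / (1 + lam ^ 2 * (p.1 ^ 2 + p.2 ^ 2)) ^ 2 :=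
  fderiv_apply_e1 ((diff_utilde lam 0) p) (hd0x lam p.2 p.1)

lemma fd_u0y (lam : ℝ) (p : ℝ × ℝ) :
    fderiv ℝ (fun q : ℝ × ℝ => utilde lam q 0) p (0, 1)
      = -(4 * lam ^ 3 * p.1 * p.2) / (1 + lam ^ 2 * (p.1 ^ 2 + p.2 ^ 2)) ^ 2 :=
  fderiv_apply_e2 ((diff_utilde lam 0) p) (hd0y lam p.1 p.2)

lemma fd_u1x (lam : ℝ) (p : ℝ × ℝ) :
    fderiv ℝ (fun q : ℝ × ℝ => utilde lam q 1) p (1, 0)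
      = -(4 * lam ^ 3 * p.1 * p.2) / (1 + lam ^ 2 * (p.1 ^ 2 + p.2 ^ 2)) ^ 2 :=
  fderiv_apply_e1 ((diff_utilde lam 1) p) (hd1x lam p.2 p.1)

lemma fd_u1y (lam : ℝ) (p : ℝ × ℝ) :
    fderiv ℝ (fun q : ℝ × ℝ => utilde lam q 1) p (0, 1)
      = 2 * lam * (1 + lam ^ 2 * (p.1 ^ 2 - p.2 ^ 2)) / (1 + lam ^ 2 * (p.1 ^ 2 + p.2 ^ 2)) ^ 2 :=
  fderiv_apply_e2 ((diff_utilde lam 1) p) (hd1y lam p.1 p.2)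

lemma fd_u2x (lam : ℝ) (p : ℝ × ℝ) :
    fderiv ℝ (fun q : ℝ × ℝ => utilde lam q 2) p (1, 0)
      = 4 * lam ^ 2 * p.1 / (1 + lam ^ 2 * (p.1 ^ 2 + p.2 ^ 2)) ^ 2 :=
  fderiv_apply_e1 ((diff_utilde lam 2) p) (hd2x lam p.2 p.1)

lemma fd_u2y (lam : ℝ) (p : ℝ × ℝ) :
    fderiv ℝ (fun q : ℝ × ℝ => utilde lam q 2) p (0, 1)
      = 4 * lam ^ 2 * p.2 / (1 + lam ^ 2 * (p.1 ^ 2 + p.2 ^ 2)) ^ 2 :=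
  fderiv_apply_e2 ((diff_utilde lam 2) p) (hd2y lam p.1 p.2)

end Deriv

/-! ### The explicit Dirichlet density and its pointwise bound -/

/-- The Dirichlet energy density of `ũ_λ − ũ_1`, written out explicitly. -/
noncomputable def dirF (lam : ℝ) (p : ℝ × ℝ) : ℝ :=
  (2*lam*(1+lam^2*(p.2^2-p.1^2))/(1+lam^2*(p.1^2+p.2^2))^2
      - 2*(1+(p.2^2-p.1^2))/(1+(p.1^2+p.2^2))^2)^2
  + (-(4*lam^3*p.1*p.2)/(1+lam^2*(p.1^2+p.2^2))^2 - -(4*p.1*p.2)/(1+(p.1^2+p.2^2))^2)^2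
  + (-(4*lam^3*p.1*p.2)/(1+lam^2*(p.1^2+p.2^2))^2 - -(4*p.1*p.2)/(1+(p.1^2+p.2^2))^2)^2
  + (2*lam*(1+lam^2*(p.1^2-p.2^2))/(1+lam^2*(p.1^2+p.2^2))^2
      - 2*(1+(p.1^2-p.2^2))/(1+(p.1^2+p.2^2))^2)^2
  + (4*lam^2*p.1/(1+lam^2*(p.1^2+p.2^2))^2 - 4*p.1/(1+(p.1^2+p.2^2))^2)^2
  + (4*lam^2*p.2/(1+lam^2*(p.1^2+p.2^2))^2 - 4*p.2/(1+(p.1^2+p.2^2))^2)^2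

lemma integrand_eq (lam : ℝ) (p : ℝ × ℝ) :
    (∑ j : Fin 3,
        ((fderiv ℝ (fun q : ℝ × ℝ => utilde lam q j - utilde 1 q j) p (1, 0)) ^ 2 +
         (fderiv ℝ (fun q : ℝ × ℝ => utilde lam q j - utilde 1 q j) p (0, 1)) ^ 2))
      = dirF lam p := by
  have hsub : ∀ j : Fin 3, ∀ v : ℝ × ℝ,
      fderiv ℝ (fun q : ℝ × ℝ => utilde lam q j - utilde 1 q j) p v
        = fderiv ℝ (fun q : ℝ × ℝ => utilde lam q j) p v
          - fderiv ℝ (fun q : ℝ × ℝ => utilde 1 q j) p v := by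
    intro j v
    rw [fderiv_fun_sub ((diff_utilde lam j) p) ((diff_utilde 1 j) p),
      ContinuousLinearMap.sub_apply]
  rw [Fin.sum_univ_three]
  simp only [hsub, fd_u0x, fd_u0y, fd_u1x, fd_u1y, fd_u2x, fd_u2y]
  unfold dirF
  norm_num
  ring

lemma bound1x {L s t : ℝ} (hL1 : 1/2 ≤ L) (hL2 : L ≤ 2) (hs : 0 ≤ s) (ht1 : t ≤ s)
    (ht2 : -s ≤ t) :
    (2 + 2*t + 2*L*t - 4*L*s - 2*L*s^2 + 2*L^2*t + 4*L^2*s*t - 2*L^2*s^2 - 2*L^3*s^2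
        - 2*L^3*s^2*t)^2 ≤ 2500 * (1 + s)^6 := by
  have hL0 : (0:ℝ) ≤ L := by linarith
  have hL2' : L^2 ≤ 4 := by nlinarith
  have hL3' : L^3 ≤ 8 := by nlinarith
  have hst1 : (0:ℝ) ≤ s - t := by linarith
  have hst2 : (0:ℝ) ≤ s + t := by linarith
  have hs2 : (0:ℝ) ≤ s^2 := sq_nonneg s
  have hs3 : (0:ℝ) ≤ s^3 := by positivity
  have e1 : 0 ≤ 2*(1+L+L^2)*(s-t) := by positivity
  have e1' : 0 ≤ 2*(1+L+L^2)*(s+t) := by positivity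
  have e2 : 0 ≤ 4*L^2*s*(s-t) := by positivity
  have e2' : 0 ≤ 4*L^2*s*(s+t) := by positivity
  have e3 : 0 ≤ 2*L^3*s^2*(s+t) := by positivity
  have e3' : 0 ≤ 2*L^3*s^2*(s-t) := by positivity
  have e4 : 0 ≤ 4*L*s := by positivity
  have e5 : 0 ≤ 2*(L+L^2+L^3)*s^2 := by positivity
  have e6 : (1+L+L^2)*s ≤ 7*s := by nlinarith
  have e7 : L^2*s^2 ≤ 4*s^2 := by nlinarith
  have e8 : L^3*s^3 ≤ 8*s^3 := by nlinarith
  have e9 : L*s ≤ 2*s := by nlinarith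
  have e10 : (L+L^2+L^3)*s^2 ≤ 14*s^2 := by nlinarith
  have hub : (2 + 2*t + 2*L*t - 4*L*s - 2*L*s^2 + 2*L^2*t + 4*L^2*s*t - 2*L^2*s^2
        - 2*L^3*s^2 - 2*L^3*s^2*t) ≤ 44 * (1 + s)^3 := by
    linarith [e1, e2, e3, e4, e5, e6, e7, e8, hs, hs2, hs3]
  have hlb : -(44 * (1 + s)^3) ≤ (2 + 2*t + 2*L*t - 4*L*s - 2*L*s^2 + 2*L^2*t + 4*L^2*s*t
        - 2*L^2*s^2 - 2*L^3*s^2 - 2*L^3*s^2*t) := by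
    linarith [e1', e2', e3', e9, e10, e6, e7, e8, hs, hs2, hs3]
  have h := sq_le_sq' hlb hub
  linarith [h, pow_nonneg (by linarith : (0:ℝ) ≤ 1 + s) 6]

lemma boundXY {L W s : ℝ} (hL1 : 1/2 ≤ L) (hL2 : L ≤ 2) (hs : 0 ≤ s)
    (hW : W^2 ≤ s^2/4) :
    (W*(-4 - 4*L - 4*L^2 - 8*L^2*s + 4*L^3*s^2))^2 ≤ 2500 * (1 + s)^6 := by
  have hL0 : (0:ℝ) ≤ L := by linarith
  have hs1 : (0:ℝ) < 1 + s := by linarith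
  have hL2' : L^2 ≤ 4 := by nlinarith
  have hL3' : L^3 ≤ 8 := by nlinarith
  have e7 : L^2*s ≤ 4*s := by nlinarith
  have e8 : L^3*s^2 ≤ 8*s^2 := by nlinarith [sq_nonneg s]
  have e8' : 0 ≤ L^3*s^2 := by positivity
  have hQu : (-4 - 4*L - 4*L^2 - 8*L^2*s + 4*L^3*s^2) ≤ 32*(1+s)^2 := by
    nlinarith [e8, sq_nonneg s, hs]
  have hQl : -(32*(1+s)^2) ≤ (-4 - 4*L - 4*L^2 - 8*L^2*s + 4*L^3*s^2) := by
    nlinarith [e7, e8', sq_nonneg s, hs]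
  have hQ : (-4 - 4*L - 4*L^2 - 8*L^2*s + 4*L^3*s^2)^2 ≤ 1024*(1+s)^4 := by
    have := sq_le_sq' hQl hQu
    linarith [this, pow_nonneg (le_of_lt hs1) 4]
  have hprod := mul_le_mul hW hQ (sq_nonneg _) (by positivity)
  have hss : s^2 ≤ (1+s)^2 := by nlinarith
  calc (W*(-4 - 4*L - 4*L^2 - 8*L^2*s + 4*L^3*s^2))^2
      = W^2 * (-4 - 4*L - 4*L^2 - 8*L^2*s + 4*L^3*s^2)^2 := by ring
    _ ≤ s^2/4 * (1024*(1+s)^4) := hprod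
    _ = 256 * s^2 * (1+s)^4 := by ring
    _ ≤ 256 * (1+s)^2 * (1+s)^4 := by
        have := mul_le_mul_of_nonneg_right hss (pow_nonneg (le_of_lt hs1) 4)
        linarith [this]
    _ ≤ 2500 * (1 + s)^6 := by linarith [pow_nonneg (le_of_lt hs1) 6]

lemma boundX {L X s : ℝ} (hL1 : 1/2 ≤ L) (hL2 : L ≤ 2) (hs : 0 ≤ s) (hx : X^2 ≤ s) :
    (X*(4 + 4*L - 4*L^2*s^2 - 4*L^3*s^2))^2 ≤ 2500 * (1 + s)^6 := by
  have hL0 : (0:ℝ) ≤ L := by linarith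
  have hs1 : (0:ℝ) < 1 + s := by linarith
  have hL2' : L^2 ≤ 4 := by nlinarith
  have hL3' : L^3 ≤ 8 := by nlinarith
  have e7 : L^2*s^2 ≤ 4*s^2 := by nlinarith [sq_nonneg s]
  have e8 : L^3*s^2 ≤ 8*s^2 := by nlinarith [sq_nonneg s]
  have e7' : 0 ≤ L^2*s^2 := by positivity
  have e8' : 0 ≤ L^3*s^2 := by positivity
  have hRu : (4 + 4*L - 4*L^2*s^2 - 4*L^3*s^2) ≤ 48*(1+s)^2 := by
    nlinarith [e7', e8', sq_nonneg s, hs]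
  have hRl : -(48*(1+s)^2) ≤ (4 + 4*L - 4*L^2*s^2 - 4*L^3*s^2) := by
    nlinarith [e7, e8, sq_nonneg s, hs]
  have hR : (4 + 4*L - 4*L^2*s^2 - 4*L^3*s^2)^2 ≤ 2304*(1+s)^4 := by
    have := sq_le_sq' hRl hRu
    linarith [this, pow_nonneg (le_of_lt hs1) 4]
  have hprod' : X^2 * (4 + 4*L - 4*L^2*s^2 - 4*L^3*s^2)^2 ≤ s * (2304*(1+s)^4) :=
    mul_le_mul hx hR (sq_nonneg _) hs
  calc (X*(4 + 4*L - 4*L^2*s^2 - 4*L^3*s^2))^2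
      = X^2 * (4 + 4*L - 4*L^2*s^2 - 4*L^3*s^2)^2 := by ring
    _ ≤ s * (2304*(1+s)^4) := hprod'
    _ ≤ (1+s) * (2304*(1+s)^4) := by
        have := mul_le_mul_of_nonneg_right (show s ≤ 1+s by linarith)
          (by positivity : (0:ℝ) ≤ 2304*(1+s)^4)
        linarith [this]
    _ ≤ 2500 * (1 + s)^6 := by
        linarith [pow_nonneg hs 2, pow_nonneg hs 3, pow_nonneg hs 4, pow_nonneg hs 5,
          pow_nonneg hs 6]

lemma keybound {lam s M : ℝ} (hl1 : 1/2 ≤ lam) (hl2 : lam ≤ 2) (hs : 0 ≤ s)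
    (hM : M^2 ≤ 2500*(1+s)^6) :
    ((lam-1)*M/((1+lam^2*s)^2*(1+s)^2))^2 ≤ 640000*(lam-1)^2/(1+s)^2 := by
  have ha : (0:ℝ) < 1+s := by linarith
  have hb : (0:ℝ) < 1+lam^2*s := by nlinarith
  have hq : (1:ℝ) ≤ 4*lam^2 := by nlinarith
  have hab : 1+s ≤ 4*(1+lam^2*s) := by nlinarith [mul_le_mul_of_nonneg_right hq hs]
  have h4 : (1+s)^4 ≤ (4*(1+lam^2*s))^4 := pow_le_pow_left₀ (le_of_lt ha) hab 4
  rw [div_pow, mul_pow, div_le_div_iff₀ (by positivity) (by positivity)]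
  have key : M^2*(1+s)^2 ≤ 640000*((1+lam^2*s)^2*(1+s)^2)^2 := by
    have h1 : M^2*(1+s)^2 ≤ 2500*(1+s)^6*(1+s)^2 :=
      mul_le_mul_of_nonneg_right hM (sq_nonneg _)
    have h2 : 2500*(1+s)^4*(1+s)^4 ≤ 2500*(1+s)^4*(256*(1+lam^2*s)^4) := by
      have := mul_le_mul_of_nonneg_left h4 (by positivity : (0:ℝ) ≤ 2500*(1+s)^4)
      nlinarith [this]
    nlinarith [h1, h2]
  calc (lam-1)^2*M^2*(1+s)^2 = (lam-1)^2*(M^2*(1+s)^2) := by ring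
    _ ≤ (lam-1)^2*(640000*((1+lam^2*s)^2*(1+s)^2)^2) :=
        mul_le_mul_of_nonneg_left key (sq_nonneg _)
    _ = 640000*(lam-1)^2*((1+lam^2*s)^2*(1+s)^2)^2 := by ring

lemma dirF_le {lam : ℝ} (hl1 : 1/2 ≤ lam) (hl2 : lam ≤ 2) (p : ℝ × ℝ) :
    dirF lam p ≤ 3840000 * (lam-1)^2 / (1 + (p.1^2 + p.2^2))^2 := by
  simp only [dirF]
  have h1 : (1+lam^2*(p.1^2+p.2^2)) ≠ 0 := by positivity
  have h2 : (1+(p.1^2+p.2^2)) ≠ 0 := by positivity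
  have hs : (0:ℝ) ≤ p.1^2+p.2^2 := by positivity
  have ht1 : p.2^2-p.1^2 ≤ p.1^2+p.2^2 := by nlinarith [sq_nonneg p.1]
  have ht2 : -(p.1^2+p.2^2) ≤ p.2^2-p.1^2 := by nlinarith [sq_nonneg p.2]
  have ht1' : p.1^2-p.2^2 ≤ p.1^2+p.2^2 := by nlinarith [sq_nonneg p.2]
  have ht2' : -(p.1^2+p.2^2) ≤ p.1^2-p.2^2 := by nlinarith [sq_nonneg p.1]
  have b0x : (2*lam*(1+lam^2*(p.2^2-p.1^2))/(1+lam^2*(p.1^2+p.2^2))^2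
      - 2*(1+(p.2^2-p.1^2))/(1+(p.1^2+p.2^2))^2)^2
      ≤ 640000*(lam-1)^2/(1+(p.1^2+p.2^2))^2 := by
    have hE : 2*lam*(1+lam^2*(p.2^2-p.1^2))/(1+lam^2*(p.1^2+p.2^2))^2
        - 2*(1+(p.2^2-p.1^2))/(1+(p.1^2+p.2^2))^2
        = (lam-1)*(2 + 2*(p.2^2-p.1^2) + 2*lam*(p.2^2-p.1^2) - 4*lam*(p.1^2+p.2^2) - 2*lam*(p.1^2+p.2^2)^2
            + 2*lam^2*(p.2^2-p.1^2) + 4*lam^2*(p.1^2+p.2^2)*(p.2^2-p.1^2) - 2*lam^2*(p.1^2+p.2^2)^2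
            - 2*lam^3*(p.1^2+p.2^2)^2 - 2*lam^3*(p.1^2+p.2^2)^2*(p.2^2-p.1^2))
          / ((1+lam^2*(p.1^2+p.2^2))^2*(1+(p.1^2+p.2^2))^2) := by
      field_simp
      ring
    rw [hE]
    exact keybound hl1 hl2 hs (bound1x hl1 hl2 hs ht1 ht2)
  have b1y : (2*lam*(1+lam^2*(p.1^2-p.2^2))/(1+lam^2*(p.1^2+p.2^2))^2
      - 2*(1+(p.1^2-p.2^2))/(1+(p.1^2+p.2^2))^2)^2
      ≤ 640000*(lam-1)^2/(1+(p.1^2+p.2^2))^2 := by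
    have hE : 2*lam*(1+lam^2*(p.1^2-p.2^2))/(1+lam^2*(p.1^2+p.2^2))^2
        - 2*(1+(p.1^2-p.2^2))/(1+(p.1^2+p.2^2))^2
        = (lam-1)*(2 + 2*(p.1^2-p.2^2) + 2*lam*(p.1^2-p.2^2) - 4*lam*(p.1^2+p.2^2) - 2*lam*(p.1^2+p.2^2)^2
            + 2*lam^2*(p.1^2-p.2^2) + 4*lam^2*(p.1^2+p.2^2)*(p.1^2-p.2^2) - 2*lam^2*(p.1^2+p.2^2)^2
            - 2*lam^3*(p.1^2+p.2^2)^2 - 2*lam^3*(p.1^2+p.2^2)^2*(p.1^2-p.2^2))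
          / ((1+lam^2*(p.1^2+p.2^2))^2*(1+(p.1^2+p.2^2))^2) := by
      field_simp
      ring
    rw [hE]
    exact keybound hl1 hl2 hs (bound1x hl1 hl2 hs ht1' ht2')
  have bxy : (-(4*lam^3*p.1*p.2)/(1+lam^2*(p.1^2+p.2^2))^2 - -(4*p.1*p.2)/(1+(p.1^2+p.2^2))^2)^2
      ≤ 640000*(lam-1)^2/(1+(p.1^2+p.2^2))^2 := by
    have hE : -(4*lam^3*p.1*p.2)/(1+lam^2*(p.1^2+p.2^2))^2 - -(4*p.1*p.2)/(1+(p.1^2+p.2^2))^2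
        = (lam-1)*((p.1*p.2)*(-4 - 4*lam - 4*lam^2 - 8*lam^2*(p.1^2+p.2^2) + 4*lam^3*(p.1^2+p.2^2)^2))
          / ((1+lam^2*(p.1^2+p.2^2))^2*(1+(p.1^2+p.2^2))^2) := by
      field_simp
      ring
    rw [hE]
    exact keybound hl1 hl2 hs
      (boundXY hl1 hl2 hs (by nlinarith [sq_nonneg (p.1^2 - p.2^2), sq_nonneg (p.1*p.2)]))
  have b2x : (4*lam^2*p.1/(1+lam^2*(p.1^2+p.2^2))^2 - 4*p.1/(1+(p.1^2+p.2^2))^2)^2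
      ≤ 640000*(lam-1)^2/(1+(p.1^2+p.2^2))^2 := by
    have hE : 4*lam^2*p.1/(1+lam^2*(p.1^2+p.2^2))^2 - 4*p.1/(1+(p.1^2+p.2^2))^2
        = (lam-1)*(p.1*(4 + 4*lam - 4*lam^2*(p.1^2+p.2^2)^2 - 4*lam^3*(p.1^2+p.2^2)^2))
          / ((1+lam^2*(p.1^2+p.2^2))^2*(1+(p.1^2+p.2^2))^2) := by
      field_simp
      ring
    rw [hE]
    exact keybound hl1 hl2 hs (boundX hl1 hl2 hs (by nlinarith [sq_nonneg p.2]))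
  have b2y : (4*lam^2*p.2/(1+lam^2*(p.1^2+p.2^2))^2 - 4*p.2/(1+(p.1^2+p.2^2))^2)^2
      ≤ 640000*(lam-1)^2/(1+(p.1^2+p.2^2))^2 := by
    have hE : 4*lam^2*p.2/(1+lam^2*(p.1^2+p.2^2))^2 - 4*p.2/(1+(p.1^2+p.2^2))^2
        = (lam-1)*(p.2*(4 + 4*lam - 4*lam^2*(p.1^2+p.2^2)^2 - 4*lam^3*(p.1^2+p.2^2)^2))
          / ((1+lam^2*(p.1^2+p.2^2))^2*(1+(p.1^2+p.2^2))^2) := by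
      field_simp
      ring
    rw [hE]
    exact keybound hl1 hl2 hs (boundX hl1 hl2 hs (by nlinarith [sq_nonneg p.1]))
  have : 3840000 * (lam-1)^2 / (1 + (p.1^2 + p.2^2))^2
      = 6 * (640000*(lam-1)^2/(1+(p.1^2+p.2^2))^2) := by ring
  rw [this]
  linarith [b0x, b1y, bxy, b2x, b2y]

lemma dirF_nonneg (lam : ℝ) (p : ℝ × ℝ) : 0 ≤ dirF lam p := by
  unfold dirF
  positivity

lemma decay_bound (p : ℝ × ℝ) :
    1 / (1 + (p.1^2 + p.2^2))^2 ≤ 9 * (1 + ‖p‖) ^ (-(3:ℝ)) := by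
  have hn : (0:ℝ) ≤ ‖p‖ := norm_nonneg p
  have hn1 : ‖p‖ ≤ |p.1| + |p.2| := by
    rw [Prod.norm_def]
    simp only [Real.norm_eq_abs]
    exact max_le (le_add_of_nonneg_right (abs_nonneg _))
      (le_add_of_nonneg_left (abs_nonneg _))
  have hs : (0:ℝ) ≤ p.1^2 + p.2^2 := by positivity
  have h2 : (1+‖p‖)^2 ≤ 3*(1+(p.1^2+p.2^2)) := by
    nlinarith [sq_nonneg (1 - |p.1|), sq_nonneg (1 - |p.2|), sq_nonneg (|p.1| - |p.2|),
      sq_abs p.1, sq_abs p.2, hn1, hn, abs_nonneg p.1, abs_nonneg p.2]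
  have h3 : (1+‖p‖)^3 ≤ 9*(1+(p.1^2+p.2^2))^2 := by
    have h34 : (1+‖p‖)^3 ≤ (1+‖p‖)^4 :=
      pow_le_pow_right₀ (by linarith) (by norm_num)
    have h44 : (1+‖p‖)^4 ≤ (3*(1+(p.1^2+p.2^2)))^2 := by
      calc (1+‖p‖)^4 = ((1+‖p‖)^2)^2 := by ring
        _ ≤ (3*(1+(p.1^2+p.2^2)))^2 := pow_le_pow_left₀ (by positivity) h2 2
    nlinarith [h34, h44]
  have hr : (1 + ‖p‖) ^ (-(3:ℝ)) = ((1+‖p‖)^(3:ℕ))⁻¹ := by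
    rw [← Real.rpow_natCast (1+‖p‖) 3, ← Real.rpow_neg (by positivity)]
    norm_num
  rw [hr, ← div_eq_mul_inv]
  rw [div_le_div_iff₀ (by positivity) (by positivity)]
  linarith [h3]

theorem dirichlet_distance_to_identity_bound :
    ∃ C : ℝ, 0 < C ∧ ∀ lam : ℝ, 1 / 2 ≤ lam → lam ≤ 2 →
      (∀ j : Fin 3,
        Differentiable ℝ (fun p : ℝ × ℝ => utilde lam p j - utilde 1 p j)) ∧
      Integrable (fun p : ℝ × ℝ => ∑ j : Fin 3,
        ((fderiv ℝ (fun q : ℝ × ℝ => utilde lam q j - utilde 1 q j) p (1, 0)) ^ 2 +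
         (fderiv ℝ (fun q : ℝ × ℝ => utilde lam q j - utilde 1 q j) p (0, 1)) ^ 2)) ∧
      (∫ p : ℝ × ℝ, ∑ j : Fin 3,
          ((fderiv ℝ (fun q : ℝ × ℝ => utilde lam q j - utilde 1 q j) p (1, 0)) ^ 2 +
           (fderiv ℝ (fun q : ℝ × ℝ => utilde lam q j - utilde 1 q j) p (0, 1)) ^ 2))
        ≤ C * (lam - 1) ^ 2 := by
  have hbint : Integrable (fun p : ℝ × ℝ => (1 + ‖p‖) ^ (-(3:ℝ))) := by
    apply integrable_one_add_norm
    norm_num [Module.finrank_self, Module.finrank_prod]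
  set I : ℝ := ∫ p : ℝ × ℝ, (1 + ‖p‖) ^ (-(3:ℝ)) with hIdef
  have hI0 : 0 ≤ I := integral_nonneg fun p => by positivity
  refine ⟨34560000 * I + 1, by linarith, fun lam hl1 hl2 => ?_⟩
  have hdiff : ∀ j : Fin 3,
      Differentiable ℝ (fun p : ℝ × ℝ => utilde lam p j - utilde 1 p j) :=
    fun j => (diff_utilde lam j).sub (diff_utilde 1 j)
  have hbd : ∀ p : ℝ × ℝ, dirF lam p ≤ 34560000 * (lam-1)^2 * (1 + ‖p‖) ^ (-(3:ℝ)) := by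
    intro p
    have h1 := dirF_le hl1 hl2 p
    have h2 := decay_bound p
    have h3 : 3840000 * (lam-1)^2 / (1 + (p.1^2 + p.2^2))^2
        = 3840000 * (lam-1)^2 * (1 / (1 + (p.1^2 + p.2^2))^2) := by ring
    have h4 : 3840000 * (lam-1)^2 * (1 / (1 + (p.1^2 + p.2^2))^2)
        ≤ 3840000 * (lam-1)^2 * (9 * (1 + ‖p‖) ^ (-(3:ℝ))) :=
      mul_le_mul_of_nonneg_left h2 (by positivity)
    calc dirF lam p ≤ 3840000 * (lam-1)^2 / (1 + (p.1^2 + p.2^2))^2 := h1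
      _ = 3840000 * (lam-1)^2 * (1 / (1 + (p.1^2 + p.2^2))^2) := h3
      _ ≤ 3840000 * (lam-1)^2 * (9 * (1 + ‖p‖) ^ (-(3:ℝ))) := h4
      _ = 34560000 * (lam-1)^2 * (1 + ‖p‖) ^ (-(3:ℝ)) := by ring
  have hGint : Integrable (fun p : ℝ × ℝ => 34560000 * (lam-1)^2 * (1 + ‖p‖) ^ (-(3:ℝ))) :=
    hbint.const_mul _
  have hmeas : AEStronglyMeasurable (dirF lam) volume := by
    apply Measurable.aestronglyMeasurable
    unfold dirF
    fun_prop
  have hFint : Integrable (dirF lam) := by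
    apply Integrable.mono' hGint hmeas
    filter_upwards with p
    rw [Real.norm_eq_abs, abs_of_nonneg (dirF_nonneg lam p)]
    exact hbd p
  have heq : (fun p : ℝ × ℝ => ∑ j : Fin 3,
      ((fderiv ℝ (fun q : ℝ × ℝ => utilde lam q j - utilde 1 q j) p (1, 0)) ^ 2 +
       (fderiv ℝ (fun q : ℝ × ℝ => utilde lam q j - utilde 1 q j) p (0, 1)) ^ 2))
      = dirF lam := funext fun p => integrand_eq lam p
  refine ⟨hdiff, ?_, ?_⟩
  · rw [heq]
    exact hFint
  · rw [show (∫ p : ℝ × ℝ, ∑ j : Fin 3,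
        ((fderiv ℝ (fun q : ℝ × ℝ => utilde lam q j - utilde 1 q j) p (1, 0)) ^ 2 +
         (fderiv ℝ (fun q : ℝ × ℝ => utilde lam q j - utilde 1 q j) p (0, 1)) ^ 2))
        = ∫ p : ℝ × ℝ, dirF lam p from by rw [heq]]
    have hle : (∫ p : ℝ × ℝ, dirF lam p)
        ≤ ∫ p : ℝ × ℝ, 34560000 * (lam-1)^2 * (1 + ‖p‖) ^ (-(3:ℝ)) :=
      integral_mono hFint hGint hbd
    have hG : (∫ p : ℝ × ℝ, 34560000 * (lam-1)^2 * (1 + ‖p‖) ^ (-(3:ℝ)))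
        = 34560000 * (lam-1)^2 * I := by
      rw [hIdef, ← integral_const_mul]
    rw [hG] at hle
    nlinarith [hle, sq_nonneg (lam - 1), hI0, mul_nonneg hI0 (sq_nonneg (lam-1))]
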